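/- Let q = (q0,q1,q2,q3) ∈ ℝ⁴ with q0² + q1² + q2² + q3² = 1, let E, v_w, g_k, δ, l̇ ∈ ℝ and l ≠ 0, and set v_a = E·v_w·(q0²+q1²−q2²−q3²) − E·l̇. Define the body-frame turn rates ω_roll = −(2·v_w/l)·(q1q2 − q0q3), ω_pitch = −(v_w/l)·(E·(q0²+q1²−q2²−q3²) − 2(q1q3 + q0q2)) + E·l̇/l, and ω_yaw = g_k·v_a·δ. Then the quaternion kinematic equation q̇ = ½·M·q, with M the matrix with rows (0, ω_yaw, ω_pitch, ω_roll), (−ω_yaw, 0, −ω_roll, ω_pitch), (−ω_pitch, ω_roll, 0, −ω_yaw), (−ω_roll, −ω_pitch, ω_yaw, 0), evaluates exactly to the kite equations of motion: ½·M·q = (v_a/(2l))·(−q2, −q3, q0, q1) + (v_w/l)·(q0(q2²+q3²), q1(q2²+q3²), −q2(q0²+q1²), −q3(q0²+q1²)) + (g_k·v_a·δ/2)·(q1, −q0, −q3, q2). -/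

import Mathlib

open Matrix

noncomputable def kitePhi (E vw gk δ l ldot : ℝ) (q : EuclideanSpace ℝ (Fin 4)) :
    EuclideanSpace ℝ (Fin 4) :=
  let va := E * vw * (q 0 ^ 2 + q 1 ^ 2 - q 2 ^ 2 - q 3 ^ 2) - E * ldot
  (va / (2 * l)) • (WithLp.toLp 2 ![-(q 2), -(q 3), q 0, q 1] : EuclideanSpace ℝ (Fin 4))
    + (vw / l) • (WithLp.toLp 2 ![q 0 * (q 2 ^ 2 + q 3 ^ 2), q 1 * (q 2 ^ 2 + q 3 ^ 2),
        -(q 2) * (q 0 ^ 2 + q 1 ^ 2), -(q 3) * (q 0 ^ 2 + q 1 ^ 2)] :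
        EuclideanSpace ℝ (Fin 4))
    + (gk * va * δ / 2) • (WithLp.toLp 2 ![q 1, -(q 0), -(q 3), q 2] : EuclideanSpace ℝ (Fin 4))

/-- The matrix of the quaternion attitude kinematics `q̇ = ½ M q`. -/
def kiteOmegaMatrix (ωroll ωpitch ωyaw : ℝ) : Matrix (Fin 4) (Fin 4) ℝ :=
  !![0, ωyaw, ωpitch, ωroll;
     -ωyaw, 0, -ωroll, ωpitch;
     -ωpitch, ωroll, 0, -ωyaw;
     -ωroll, -ωpitch, ωyaw, 0]

/-- For a unit quaternion, the kinematic equation `½ M q` with the aerodynamic turn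
rates evaluates exactly to the kite equations of motion. -/
theorem kite_kinematics_eval (q : EuclideanSpace ℝ (Fin 4))
    (hq : q 0 ^ 2 + q 1 ^ 2 + q 2 ^ 2 + q 3 ^ 2 = 1)
    (E vw gk δ ldot l : ℝ) (hl : l ≠ 0) :
    let va := E * vw * (q 0 ^ 2 + q 1 ^ 2 - q 2 ^ 2 - q 3 ^ 2) - E * ldot
    let ωroll := -(2 * vw / l) * (q 1 * q 2 - q 0 * q 3)
    let ωpitch := -(vw / l) * (E * (q 0 ^ 2 + q 1 ^ 2 - q 2 ^ 2 - q 3 ^ 2)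
        - 2 * (q 1 * q 3 + q 0 * q 2)) + E * ldot / l
    let ωyaw := gk * va * δ
    ((1 / 2 : ℝ) • (WithLp.toLp 2 ((kiteOmegaMatrix ωroll ωpitch ωyaw).mulVec q) :
        EuclideanSpace ℝ (Fin 4)) = kitePhi E vw gk δ l ldot q) := by

  ext i
  have h2 : q 2 ^ 2 = 1 - q 0 ^ 2 - q 1 ^ 2 - q 3 ^ 2 := by linarith
  simp only [kitePhi, kiteOmegaMatrix, PiLp.smul_apply, PiLp.add_apply, smul_eq_mul]
  fin_cases i <;>
    simp [Matrix.mulVec, dotProduct, Fin.sum_univ_four] <;>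
    field_simp <;> ring
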